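/- In a bipartite graph G, a vertex v belongs to core(G) (the intersection of all maximum independent sets) if and only if there exists a maximum matching of G that does not saturate v. -/

import Mathlib

/-- A set of vertices is independent if no two of its vertices are adjacent. -/
def SimpleGraph.IsIndepSet' {V : Type*} (G : SimpleGraph V) (s : Set V) : Prop :=
  s.Pairwise (fun a b => ¬ G.Adj a b)

/-- The independence number: the maximum cardinality of an independent set. -/
noncomputable def indepNum {V : Type*} (G : SimpleGraph V) : ℕ :=
  sSup {n | ∃ s : Set V, G.IsIndepSet' s ∧ s.ncard = n}

/-- The matching number: the maximum cardinality of a matching. -/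
noncomputable def matchNum {V : Type*} (G : SimpleGraph V) : ℕ :=
  sSup {n | ∃ M : SimpleGraph.Subgraph G, M.IsMatching ∧ M.edgeSet.ncard = n}

/-- A maximum independent set. -/
def IsMaxIndepSet {V : Type*} (G : SimpleGraph V) (s : Set V) : Prop :=
  G.IsIndepSet' s ∧ s.ncard = indepNum G

/-- The core: intersection of all maximum independent sets. -/
noncomputable def core {V : Type*} (G : SimpleGraph V) : Set V :=
  ⋂₀ {s | IsMaxIndepSet G s}

/-- Open neighborhood of a set. -/
def nbhdSet {V : Type*} (G : SimpleGraph V) (s : Set V) : Set V :=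
  {v | ∃ w ∈ s, G.Adj v w}

/-- Closed neighborhood of a set. -/
def closedNbhdSet {V : Type*} (G : SimpleGraph V) (s : Set V) : Set V :=
  s ∪ nbhdSet G s

/-- The tree component of `G - xy` containing `x`. -/
noncomputable def treeComp {V : Type*} (G : SimpleGraph V) (x y : V) :
    SimpleGraph ((G.deleteEdges {s(x,y)}).connectedComponentMk x).supp :=
  (G.deleteEdges {s(x,y)}).induce ((G.deleteEdges {s(x,y)}).connectedComponentMk x).supp


section Aux

open SimpleGraph

variable {V : Type*} [Fintype V] (G : SimpleGraph V)

lemma indepSet_bdd : BddAbove {n | ∃ s : Set V, G.IsIndepSet' s ∧ s.ncard = n} := by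
  refine ⟨Fintype.card V, ?_⟩
  rintro n ⟨s, _, rfl⟩
  simpa [Set.ncard_univ] using Set.ncard_le_ncard (Set.subset_univ s) Set.finite_univ

lemma matchSet_bdd : BddAbove {n | ∃ M : SimpleGraph.Subgraph G, M.IsMatching ∧ M.edgeSet.ncard = n} := by
  classical
  refine ⟨Fintype.card (Sym2 V), ?_⟩
  rintro n ⟨M, _, rfl⟩
  simpa [Set.ncard_univ] using Set.ncard_le_ncard (Set.subset_univ M.edgeSet) Set.finite_univ

lemma le_indepNum {s : Set V} (hs : G.IsIndepSet' s) : s.ncard ≤ _root_.indepNum G :=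
  le_csSup (indepSet_bdd G) ⟨s, hs, rfl⟩

lemma le_matchNum {M : Subgraph G} (hM : M.IsMatching) : M.edgeSet.ncard ≤ matchNum G :=
  le_csSup (matchSet_bdd G) ⟨M, hM, rfl⟩

lemma exists_maxIndep : ∃ s : Set V, G.IsIndepSet' s ∧ s.ncard = _root_.indepNum G := by
  have h := Nat.sSup_mem (s := {n | ∃ s : Set V, G.IsIndepSet' s ∧ s.ncard = n})
    ⟨0, ∅, by simp [SimpleGraph.IsIndepSet'], by simp⟩ (indepSet_bdd G)
  exact h

lemma exists_maxMatching : ∃ M : Subgraph G, M.IsMatching ∧ M.edgeSet.ncard = matchNum G := by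
  have h := Nat.sSup_mem (s := {n | ∃ M : Subgraph G, M.IsMatching ∧ M.edgeSet.ncard = n})
    ⟨0, ⊥, by intro v hv; simp at hv, by simp⟩ (matchSet_bdd G)
  exact h

variable {G}

set_option linter.unusedSectionVars false

lemma matching_unique_edge {M : Subgraph G} (hM : M.IsMatching) {e₁ e₂ : Sym2 V} {x : V}
    (h₁ : e₁ ∈ M.edgeSet) (h₂ : e₂ ∈ M.edgeSet) (hx₁ : x ∈ e₁) (hx₂ : x ∈ e₂) : e₁ = e₂ := by
  obtain ⟨y₁, rfl⟩ := Sym2.mem_iff_exists.mp hx₁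
  obtain ⟨y₂, rfl⟩ := Sym2.mem_iff_exists.mp hx₂
  rw [Subgraph.mem_edgeSet] at h₁ h₂
  obtain ⟨w, _, hw⟩ := hM (M.edge_vert h₁)
  rw [hw y₁ h₁, hw y₂ h₂]

/-- choose an endpoint outside `S` for each matching edge -/
lemma matching_indep_inj {M : Subgraph G} (hM : M.IsMatching) {S : Set V}
    (hS : G.IsIndepSet' S) :
    ∃ φ : Sym2 V → V, Set.InjOn φ M.edgeSet ∧
      ∀ e ∈ M.edgeSet, φ e ∈ e ∧ φ e ∉ S ∧ φ e ∈ M.support := by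
  classical
  have key : ∀ e : Sym2 V, ∃ x : V, e ∈ M.edgeSet → (x ∈ e ∧ x ∉ S ∧ x ∈ M.support) := by
    intro e
    by_cases he : e ∈ M.edgeSet
    · induction e with
      | _ x y =>
        rw [Subgraph.mem_edgeSet] at he
        have hadj : G.Adj x y := M.adj_sub he
        have hne : x ≠ y := hadj.ne
        have : ¬ (x ∈ S ∧ y ∈ S) := by
          rintro ⟨hx, hy⟩
          exact hS hx hy hne hadj
        by_cases hx : x ∈ S
        · exact ⟨y, fun _ => ⟨Sym2.mem_mk_right x y, fun hy => this ⟨hx, hy⟩, ⟨x, he.symm⟩⟩⟩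
        · exact ⟨x, fun _ => ⟨Sym2.mem_mk_left x y, hx, ⟨y, he⟩⟩⟩
    · induction e with
      | _ x y => exact ⟨x, fun h => absurd h he⟩
  choose φ hφ using key
  refine ⟨φ, ?_, fun e he => hφ e he⟩
  intro e₁ h₁ e₂ h₂ heq
  refine matching_unique_edge hM h₁ h₂ (hφ e₁ h₁).1 ?_
  exact heq ▸ (hφ e₂ h₂).1

lemma matching_indep_card {M : Subgraph G} (hM : M.IsMatching) {S : Set V}
    (hS : G.IsIndepSet' S) : M.edgeSet.ncard + S.ncard ≤ Fintype.card V := by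
  obtain ⟨φ, hinj, hφ⟩ := matching_indep_inj hM hS
  have himg : φ '' M.edgeSet ⊆ Sᶜ := by
    rintro _ ⟨e, he, rfl⟩
    exact (hφ e he).2.1
  have h1 : (φ '' M.edgeSet).ncard = M.edgeSet.ncard := Set.ncard_image_of_injOn hinj
  have h2 : (φ '' M.edgeSet).ncard ≤ (Sᶜ).ncard :=
    Set.ncard_le_ncard himg (Set.toFinite _)
  have h3 : S.ncard + (Sᶜ).ncard = Fintype.card V := by
    rw [Set.ncard_add_ncard_compl, Nat.card_eq_fintype_card]
  omega

lemma gallai (hbip : G.Colorable 2) :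
    _root_.indepNum G + matchNum G = Fintype.card V := by
  classical
  have hle : _root_.indepNum G + matchNum G ≤ Fintype.card V := by
    obtain ⟨S, hS, hSc⟩ := exists_maxIndep G
    obtain ⟨M, hM, hMc⟩ := exists_maxMatching G
    have := matching_indep_card hM hS
    omega
  obtain ⟨c⟩ := hbip
  set A : Finset V := Finset.univ.filter (fun v => c v = 0) with hA
  set B : Finset V := Finset.univ.filter (fun v => ¬ (c v = 0)) with hB
  have hABcard : A.card + B.card = Fintype.card V := by
    simpa using Finset.card_filter_add_card_filter_not
      (s := (Finset.univ : Finset V)) (p := fun v => c v = 0)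
  set N : V → Finset V := fun v => Finset.univ.filter (fun w => G.Adj v w) with hN
  have hNmem : ∀ v w, w ∈ N v ↔ G.Adj v w := by simp [hN]
  have hNB : ∀ a ∈ A, N a ⊆ B := by
    intro a ha w hw
    rw [hNmem] at hw
    simp only [hB, Finset.mem_filter, Finset.mem_univ, true_and]
    simp only [hA, Finset.mem_filter, Finset.mem_univ, true_and] at ha
    intro hw0
    exact c.valid hw (by rw [ha, hw0])
  set d : ℕ := A.powerset.sup (fun s => s.card - (s.biUnion N).card) with hdd
  have hd : ∀ s ⊆ A, s.card - (s.biUnion N).card ≤ d :=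
    fun s hs => Finset.le_sup (f := fun s => s.card - (s.biUnion N).card) (Finset.mem_powerset.mpr hs)
  have hwit : ∃ s ⊆ A, (s.biUnion N).card + d = s.card := by
    obtain ⟨s, hs, hsd⟩ := Finset.exists_mem_eq_sup A.powerset
      ⟨∅, Finset.empty_mem_powerset A⟩ (fun s => s.card - (s.biUnion N).card)
    rw [Finset.mem_powerset] at hs
    by_cases hc : (s.biUnion N).card ≤ s.card
    · exact ⟨s, hs, by omega⟩
    · refine ⟨∅, Finset.empty_subset A, by simp; omega⟩
  have hdA : d ≤ A.card := by
    obtain ⟨s, hs, hsd⟩ := hwit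
    have := Finset.card_le_card hs
    omega
  have hone : ∀ i : Fin 2, i ≠ 0 → i = 1 := by decide
  have hindep : B.card + d ≤ _root_.indepNum G := by
    obtain ⟨s, hsA, hsd⟩ := hwit
    set T : Finset V := s ∪ (B \ s.biUnion N) with hT
    have hbu : s.biUnion N ⊆ B := Finset.biUnion_subset.mpr fun a ha => hNB a (hsA ha)
    have hTindep : G.IsIndepSet' (↑T : Set V) := by
      intro x hx y hy hne hadj
      rw [Finset.mem_coe, hT, Finset.mem_union] at hx hy
      have hxy : ∀ z, z ∈ s → c z = 0 := by
        intro z hz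
        have := hsA hz
        simpa [hA] using this
      rcases hx with hx | hx <;> rcases hy with hy | hy
      · exact c.valid hadj (by rw [hxy x hx, hxy y hy])
      · have : y ∈ s.biUnion N := Finset.mem_biUnion.mpr ⟨x, hx, (hNmem x y).mpr hadj⟩
        exact (Finset.mem_sdiff.mp hy).2 this
      · have : x ∈ s.biUnion N := Finset.mem_biUnion.mpr ⟨y, hy, (hNmem y x).mpr hadj.symm⟩
        exact (Finset.mem_sdiff.mp hx).2 this
      · have hx' := (Finset.mem_sdiff.mp hx).1
        have hy' := (Finset.mem_sdiff.mp hy).1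
        simp only [hB, Finset.mem_filter, Finset.mem_univ, true_and] at hx' hy'
        exact c.valid hadj (by rw [hone _ hx', hone _ hy'])
    have hdisjAB : Disjoint A B := by
      rw [hA, hB]
      exact Finset.disjoint_filter_filter_not Finset.univ Finset.univ _
    have hdisj : Disjoint s (B \ s.biUnion N) :=
      Finset.disjoint_of_subset_left hsA (Finset.disjoint_of_subset_right (Finset.sdiff_subset) hdisjAB)
    have hTcard : T.card = B.card + d := by
      rw [hT, Finset.card_union_of_disjoint hdisj, Finset.card_sdiff_of_subset hbu]
      have : (s.biUnion N).card ≤ B.card := Finset.card_le_card hbu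
      omega
    have := le_indepNum G hTindep
    rw [Set.ncard_coe_finset] at this
    omega
  have hmatch : A.card - d ≤ matchNum G := by
    set emb1 : V ↪ V ⊕ Fin d := ⟨Sum.inl, Sum.inl_injective⟩ with hemb1
    set emb2 : Fin d ↪ V ⊕ Fin d := ⟨Sum.inr, Sum.inr_injective⟩ with hemb2
    set t' : {x // x ∈ A} → Finset (V ⊕ Fin d) := fun a =>
      ((N a.1).map emb1) ∪ (Finset.univ.map emb2) with ht'
    have hall : ∀ s : Finset {x // x ∈ A}, s.card ≤ (s.biUnion t').card := by
      intro s
      rcases s.eq_empty_or_nonempty with rfl | hs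
      · simp
      · have hsplit : s.biUnion t' =
            ((s.biUnion (fun a => N a.1)).map emb1) ∪ (Finset.univ.map emb2) := by
          ext x
          simp only [ht', Finset.mem_biUnion, Finset.mem_union, Finset.mem_map]
          constructor
          · rintro ⟨a, ha, (h | h)⟩
            · exact Or.inl (by
                obtain ⟨w, hw, rfl⟩ := h
                exact ⟨w, ⟨a, ha, hw⟩, rfl⟩)
            · exact Or.inr h
          · rintro (⟨w, hw, rfl⟩ | h)
            · obtain ⟨a, ha, hw'⟩ := hw
              exact ⟨a, ha, Or.inl ⟨w, hw', rfl⟩⟩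
            · obtain ⟨a0, ha0⟩ := hs
              exact ⟨a0, ha0, Or.inr h⟩
        have hdisj : Disjoint ((s.biUnion (fun a => N a.1)).map emb1)
            (Finset.univ.map emb2) := by
          simp only [Finset.disjoint_left, Finset.mem_map, hemb1, hemb2]
          rintro _ ⟨w, _, rfl⟩ ⟨r, _, h⟩
          simp at h
        rw [hsplit, Finset.card_union_of_disjoint hdisj, Finset.card_map, Finset.card_map,
          Finset.card_univ, Fintype.card_fin]
        set s0 : Finset V := s.image (fun a => a.1) with hs0
        have hs0A : s0 ⊆ A := by
          intro x hx
          obtain ⟨a, _, rfl⟩ := Finset.mem_image.mp hx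
          exact a.2
        have hs0card : s0.card = s.card :=
          Finset.card_image_of_injective s Subtype.val_injective
        have hs0bu : s0.biUnion N = s.biUnion (fun a => N a.1) := Finset.image_biUnion
        have := hd s0 hs0A
        rw [hs0card, hs0bu] at this
        omega
    obtain ⟨f, hfinj, hft⟩ := (Finset.all_card_le_biUnion_card_iff_exists_injective t').mp hall
    set g : {x // x ∈ A} → V := fun a => Sum.elim id (fun _ => a.1) (f a) with hg
    set A' : Finset {x // x ∈ A} := Finset.univ.filter (fun a => (f a).isLeft) with hA'
    have hgl : ∀ a ∈ A', f a = Sum.inl (g a) := by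
      intro a ha
      simp only [hA', Finset.mem_filter] at ha
      rcases hfa : f a with b | r
      · simp [hg, hfa]
      · rw [hfa] at ha; simp at ha
    have hadjg : ∀ a ∈ A', G.Adj a.1 (g a) := by
      intro a ha
      have := hft a
      rw [hgl a ha] at this
      simp only [ht', Finset.mem_union, Finset.mem_map, hemb1, hemb2] at this
      rcases this with ⟨w, hw, hw'⟩ | ⟨r, _, hr⟩
      · simp only [Function.Embedding.coeFn_mk, Sum.inl.injEq] at hw'
        subst hw'
        exact (hNmem a.1 (g a)).mp hw
      · simp at hr
    have hginj : ∀ a ∈ A', ∀ b ∈ A', g a = g b → a = b := by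
      intro a ha b hb hab
      apply hfinj
      rw [hgl a ha, hgl b hb, hab]
    have hcA : ∀ a : {x // x ∈ A}, c a.1 = 0 := by
      intro a
      have h := a.2
      simp only [hA, Finset.mem_filter, Finset.mem_univ, true_and] at h
      exact h
    have hcg : ∀ a ∈ A', c (g a) ≠ 0 := by
      intro a ha h0
      exact c.valid (hadjg a ha) (by rw [hcA a, h0])
    have hA'card : A.card - d ≤ A'.card := by
      set A'' : Finset {x // x ∈ A} := Finset.univ.filter (fun a => ¬ (f a).isLeft = true) with hA''
      have hsum : A'.card + A''.card = A.card := by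
        rw [hA', hA'']
        rw [Finset.card_filter_add_card_filter_not]
        simp [Finset.card_univ]
      have hA''d : A''.card ≤ d := by
        have hsub : A''.image f ⊆ Finset.univ.map emb2 := by
          intro x hx
          obtain ⟨a, ha, rfl⟩ := Finset.mem_image.mp hx
          simp only [hA'', Finset.mem_filter] at ha
          rcases hfa : f a with b | r
          · rw [hfa] at ha; simp at ha
          · simp [hfa, hemb2]
        have h1 : (A''.image f).card = A''.card :=
          Finset.card_image_of_injective A'' hfinj
        have h2 := Finset.card_le_card hsub
        rw [h1, Finset.card_map, Finset.card_univ, Fintype.card_fin] at h2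
        exact h2
      omega
    -- build the matching
    set M : Subgraph G := {
      verts := (↑(A'.image (fun a => a.1)) : Set V) ∪ ↑(A'.image g)
      Adj := fun x y => (∃ a ∈ A', a.1 = x ∧ g a = y) ∨ (∃ a ∈ A', a.1 = y ∧ g a = x)
      adj_sub := by
        rintro x y (⟨a, ha, rfl, rfl⟩ | ⟨a, ha, rfl, rfl⟩)
        · exact hadjg a ha
        · exact (hadjg a ha).symm
      edge_vert := by
        rintro x y (⟨a, ha, rfl, rfl⟩ | ⟨a, ha, rfl, rfl⟩)
        · exact Or.inl (Finset.mem_coe.mpr (Finset.mem_image.mpr ⟨a, ha, rfl⟩))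
        · exact Or.inr (Finset.mem_coe.mpr (Finset.mem_image.mpr ⟨a, ha, rfl⟩))
      symm := by
        refine ⟨?_⟩
        rintro x y (h | h)
        · exact Or.inr h
        · exact Or.inl h } with hM
    have hMmatch : M.IsMatching := by
      intro v hv
      rcases hv with hv | hv
      · obtain ⟨a, ha, rfl⟩ := Finset.mem_image.mp (Finset.mem_coe.mp hv)
        refine ⟨g a, Or.inl ⟨a, ha, rfl, rfl⟩, ?_⟩
        rintro y (⟨a', ha', ha1, hga'⟩ | ⟨a', ha', ha1, hga'⟩)
        · rw [← hga', Subtype.val_injective ha1]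
        · exact absurd (hga' ▸ hcA a) (hcg a' ha')
      · obtain ⟨a, ha, rfl⟩ := Finset.mem_image.mp (Finset.mem_coe.mp hv)
        refine ⟨a.1, Or.inr ⟨a, ha, rfl, rfl⟩, ?_⟩
        rintro y (⟨a', ha', ha1, hga'⟩ | ⟨a', ha', ha1, hga'⟩)
        · exact absurd (ha1 ▸ hcA a') (hcg a ha)
        · rw [← ha1, hginj a' ha' a ha hga']
    have heS : (↑(A'.image (fun a => s(a.1, g a))) : Set (Sym2 V)) ⊆ M.edgeSet := by
      intro e he
      obtain ⟨a, ha, rfl⟩ := Finset.mem_image.mp (Finset.mem_coe.mp he)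
      exact Or.inl ⟨a, ha, rfl, rfl⟩
    have heScard : (A'.image (fun a => s(a.1, g a))).card = A'.card := by
      apply Finset.card_image_of_injOn
      intro a ha b hb hab
      rcases Sym2.eq_iff.mp hab with ⟨h1, _⟩ | ⟨h1, h2⟩
      · exact Subtype.val_injective h1
      · exact absurd (h1 ▸ hcA a) (hcg b hb)
    have hfin : M.edgeSet.ncard ≥ A'.card := by
      have := Set.ncard_le_ncard heS (Set.toFinite _)
      rwa [Set.ncard_coe_finset, heScard] at this
    have := le_matchNum G hMmatch
    omega
  omega

lemma matching_transfer {G G' : SimpleGraph V} (h : G' ≤ G) (M : Subgraph G') :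
    ∃ M' : Subgraph G, M'.verts = M.verts ∧ M'.Adj = M.Adj ∧
      M'.edgeSet = M.edgeSet ∧ M'.support = M.support ∧
      (M.IsMatching → M'.IsMatching) := by
  refine ⟨⟨M.verts, M.Adj, fun hadj => h (M.adj_sub hadj), M.edge_vert, M.symm⟩,
    rfl, rfl, rfl, rfl, ?_⟩
  intro hm v hv
  exact hm hv


end Aux

theorem stmt9 {V : Type*} [Fintype V] (G : SimpleGraph V)
    (hbip : G.Colorable 2) (v : V) :
    v ∈ core G ↔
      ∃ M : SimpleGraph.Subgraph G, M.IsMatching ∧ M.edgeSet.ncard = matchNum G ∧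
        v ∉ M.support := by
  classical
  have hG : indepNum G + matchNum G = Fintype.card V := gallai hbip
  constructor
  · intro hv
    by_contra hno
    push_neg at hno
    set G' : SimpleGraph V := G.deleteEdges (G.incidenceSet v) with hG'def
    have hle' : G' ≤ G := G.deleteEdges_le _
    have hbip' : G'.Colorable 2 := hbip.mono_left hle'
    have hG'' : indepNum G' + matchNum G' = Fintype.card V := gallai hbip'
    have hv_not : ∀ w, ¬ G'.Adj v w := by
      intro w hw
      rw [hG'def, SimpleGraph.deleteEdges_adj] at hw
      exact hw.2 ⟨G.mem_edgeSet.mpr hw.1, Sym2.mem_mk_left v w⟩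
    -- matchNum G' ≤ matchNum G and strictness
    obtain ⟨M0, hM0, hM0c⟩ := exists_maxMatching G'
    obtain ⟨M1, hv1, ha1, he1, hs1, hm1⟩ := matching_transfer hle' M0
    have hM1 : M1.IsMatching := hm1 hM0
    have hle'' : matchNum G' ≤ matchNum G := by
      have := le_matchNum G hM1
      rw [he1, hM0c] at this
      exact this
    have hlt : matchNum G' < matchNum G := by
      rcases lt_or_eq_of_le hle'' with h | h
      · exact h
      · exfalso
        have hvmem : v ∈ M1.support := by
          apply hno M1 hM1
          rw [he1, hM0c, h]
        rw [hs1] at hvmem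
        obtain ⟨w, hw⟩ := hvmem
        exact hv_not w (M0.adj_sub hw)
    -- find max indep set of G' and shrink
    obtain ⟨S', hS', hS'c⟩ := exists_maxIndep G'
    have hSind : G.IsIndepSet' (S' \ {v}) := by
      intro x hx y hy hne hadj
      have hx' : x ∈ S' := hx.1
      have hy' : y ∈ S' := hy.1
      have hadj' : G'.Adj x y := by
        rw [hG'def, SimpleGraph.deleteEdges_adj]
        refine ⟨hadj, ?_⟩
        intro hmem
        rcases (Sym2.mem_iff).mp hmem.2 with rfl | rfl
        · exact hx.2 rfl
        · exact hy.2 rfl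
      exact hS' hx' hy' hne hadj'
    have hcard : indepNum G ≤ (S' \ {v}).ncard := by
      have h1 : S'.ncard ≤ (S' \ {v}).ncard + 1 := by
        have h2 : S' ⊆ (S' \ {v}) ∪ {v} := by
          intro x hx
          by_cases hxv : x = v
          · exact Or.inr (by simp [hxv])
          · exact Or.inl ⟨hx, hxv⟩
        calc S'.ncard ≤ ((S' \ {v}) ∪ {v}).ncard :=
              Set.ncard_le_ncard h2 (Set.toFinite _)
          _ ≤ (S' \ {v}).ncard + ({v} : Set V).ncard := Set.ncard_union_le _ _
          _ = (S' \ {v}).ncard + 1 := by rw [Set.ncard_singleton]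
      have h3 : indepNum G + 1 ≤ indepNum G' := by omega
      omega
    have hSmax : IsMaxIndepSet G (S' \ {v}) :=
      ⟨hSind, le_antisymm (le_indepNum G hSind) hcard⟩
    have : v ∈ S' \ {v} := hv _ hSmax
    exact this.2 rfl
  · rintro ⟨M, hM, hMc, hvs⟩
    intro S hS
    by_contra hvS
    obtain ⟨hSind, hScard⟩ := hS
    obtain ⟨φ, hinj, hφ⟩ := matching_indep_inj hM hSind
    have himg : φ '' M.edgeSet ⊆ Sᶜ := by
      rintro _ ⟨e, he, rfl⟩
      exact (hφ e he).2.1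
    have h1 : (φ '' M.edgeSet).ncard = M.edgeSet.ncard := Set.ncard_image_of_injOn hinj
    have h3 : S.ncard + (Sᶜ).ncard = Fintype.card V := by
      rw [Set.ncard_add_ncard_compl, Nat.card_eq_fintype_card]
    have h4 : S.ncard ≤ indepNum G := le_indepNum G hSind
    have heq : φ '' M.edgeSet = Sᶜ := by
      apply Set.eq_of_subset_of_ncard_le himg _ (Set.toFinite _)
      omega
    have hvc : v ∈ Sᶜ := hvS
    rw [← heq] at hvc
    obtain ⟨e, he, hφe⟩ := hvc
    exact hvs (hφe ▸ (hφ e he).2.2)
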